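/- With the notation of the previous setting (C = D ⊕ ⟨u⟩, C_pub = D ⊕ ⟨v⟩, λ₀ ∈ D^⊥ \ (C^⊥ ∪ C_pub^⊥)), define a₀ := (1/⟨λ₀,u⟩)(v − u). Then ⟨a₀,λ₀⟩ ≠ −1 and the map ψ(p) = p + ⟨λ₀,p⟩ a₀ is a linear isomorphism from C onto C_pub. -/

import Mathlib

open Submodule Matrix

/-- Dot product with a fixed vector, as a linear map. -/
noncomputable def dotL {F : Type*} [Field F] {n : ℕ} (l : Fin n → F) :
    (Fin n → F) →ₗ[F] F where
  toFun p := l ⬝ᵥ p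
  map_add' p q := by simp [dotProduct, mul_add, Finset.sum_add_distrib]
  map_smul' c p := by
    simp [dotProduct, Finset.mul_sum, smul_eq_mul, mul_comm, mul_left_comm]

/-- The map `p ↦ p + ⟨l,p⟩ • a` as a linear map. -/
noncomputable def psi {F : Type*} [Field F] {n : ℕ} (l a : Fin n → F) :
    (Fin n → F) →ₗ[F] (Fin n → F) :=
  LinearMap.id + (dotL l).smulRight a

theorem stmt17 {F : Type*} [Field F] [Fintype F] {n : ℕ}
    (C Cpub D : Submodule F (Fin n → F)) (u v : Fin n → F)
    (huC : u ∈ C) (huD : u ∉ D) (hvC : v ∈ Cpub) (hvD : v ∉ D)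
    (hC : C = D ⊔ Submodule.span F {u}) (hCpub : Cpub = D ⊔ Submodule.span F {v})
    (l₀ : Fin n → F) (hl₀D : ∀ d ∈ D, l₀ ⬝ᵥ d = 0)
    (hl₀C : ¬ ∀ c ∈ C, l₀ ⬝ᵥ c = 0) (hl₀Cp : ¬ ∀ c ∈ Cpub, l₀ ⬝ᵥ c = 0)
    (a₀ : Fin n → F) (ha₀ : a₀ = (l₀ ⬝ᵥ u)⁻¹ • (v - u)) :
    a₀ ⬝ᵥ l₀ ≠ -1 ∧ Function.Bijective (psi l₀ a₀) ∧
    Submodule.map (psi l₀ a₀) C = Cpub := by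
  -- ψ applied
  have hpsi : ∀ p, psi l₀ a₀ p = p + (l₀ ⬝ᵥ p) • a₀ := by
    intro p; simp [psi, dotL, LinearMap.smulRight_apply]; rfl
  -- l₀ ⬝ u ≠ 0
  have hα : l₀ ⬝ᵥ u ≠ 0 := by
    intro h0
    apply hl₀C
    intro c hc
    rw [hC, Submodule.mem_sup] at hc
    obtain ⟨d, hd, w, hw, rfl⟩ := hc
    obtain ⟨t, rfl⟩ := Submodule.mem_span_singleton.mp hw
    simp [dotProduct_add, dotProduct_smul, hl₀D d hd, h0]
  have hβ : l₀ ⬝ᵥ v ≠ 0 := by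
    intro h0
    apply hl₀Cp
    intro c hc
    rw [hCpub, Submodule.mem_sup] at hc
    obtain ⟨d, hd, w, hw, rfl⟩ := hc
    obtain ⟨t, rfl⟩ := Submodule.mem_span_singleton.mp hw
    simp [dotProduct_add, dotProduct_smul, hl₀D d hd, h0]
  have hla : l₀ ⬝ᵥ a₀ = (l₀ ⬝ᵥ u)⁻¹ * (l₀ ⬝ᵥ v) - 1 := by
    subst ha₀
    rw [dotProduct_smul, dotProduct_sub, smul_eq_mul]
    field_simp
  have hal : a₀ ⬝ᵥ l₀ = (l₀ ⬝ᵥ u)⁻¹ * (l₀ ⬝ᵥ v) - 1 := by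
    rw [dotProduct_comm]; exact hla
  have hne : a₀ ⬝ᵥ l₀ ≠ -1 := by
    rw [hal]
    intro h
    have : (l₀ ⬝ᵥ u)⁻¹ * (l₀ ⬝ᵥ v) = 0 := by linear_combination h
    rcases mul_eq_zero.mp this with h' | h'
    · exact hα (inv_eq_zero.mp h')
    · exact hβ h'
  have h1γ : 1 + l₀ ⬝ᵥ a₀ ≠ 0 := by
    rw [hla]
    intro h
    have : (l₀ ⬝ᵥ u)⁻¹ * (l₀ ⬝ᵥ v) = 0 := by linear_combination h
    rcases mul_eq_zero.mp this with h' | h'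
    · exact hα (inv_eq_zero.mp h')
    · exact hβ h'
  -- injective
  have hinj : Function.Injective (psi l₀ a₀) := by
    rw [← LinearMap.ker_eq_bot, Submodule.eq_bot_iff]
    intro p hp
    have hp' : p + (l₀ ⬝ᵥ p) • a₀ = 0 := by
      have := (LinearMap.mem_ker.mp hp); rwa [hpsi] at this
    have hlp : l₀ ⬝ᵥ p = 0 := by
      have h2 : l₀ ⬝ᵥ (p + (l₀ ⬝ᵥ p) • a₀) = 0 := by rw [hp']; simp
      rw [dotProduct_add, dotProduct_smul] at h2
      have : (l₀ ⬝ᵥ p) * (1 + l₀ ⬝ᵥ a₀) = 0 := by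
        simpa [mul_add, smul_eq_mul] using h2
      exact (mul_eq_zero.mp this).resolve_right h1γ
    rw [hlp, zero_smul, add_zero] at hp'
    exact hp'
  have hsurj : Function.Surjective (psi l₀ a₀) :=
    (LinearMap.injective_iff_surjective).mp hinj
  refine ⟨hne, ⟨hinj, hsurj⟩, ?_⟩
  -- ψ fixes D
  have hψD : ∀ d ∈ D, psi l₀ a₀ d = d := by
    intro d hd; rw [hpsi, hl₀D d hd, zero_smul, add_zero]
  have hψu : psi l₀ a₀ u = v := by
    rw [hpsi, ha₀, smul_smul, mul_inv_cancel₀ hα, one_smul]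
    abel
  rw [hC, hCpub, Submodule.map_sup]
  congr 1
  · apply le_antisymm
    · rintro x ⟨d, hd, rfl⟩
      rw [hψD d hd]; exact hd
    · intro d hd
      exact ⟨d, hd, hψD d hd⟩
  · rw [Submodule.map_span, Set.image_singleton, hψu]
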